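/- Let 0 < ξ < 1, d ≥ 2, and z ∈ [1, d]. Then the maximum of (u_1^ξ + ... + u_d^ξ)^{1/ξ} over all u in the unit simplex S₊ ⊂ ℝ^d subject to d·max_{j} u_j = z equals (1/d)·(z^ξ + (d-1)^{1-ξ}·(d-z)^ξ)^{1/ξ}, attained at the point with one coordinate equal to z/d and the remaining d-1 coordinates equal to (d-z)/(d(d-1)). -/

import Mathlib

open Finset

lemma sum_rpow_le_card_rpow {ι : Type*} (s : Finset ι) (u : ι → ℝ)
    (hu : ∀ i ∈ s, 0 ≤ u i) {ξ : ℝ} (hξ0 : 0 < ξ) (hξ1 : ξ ≤ 1) (hs : s.Nonempty) :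
    ∑ i ∈ s, u i ^ ξ ≤ (s.card : ℝ) ^ (1 - ξ) * (∑ i ∈ s, u i) ^ ξ := by
  have hc : (0:ℝ) < s.card := by exact_mod_cast hs.card_pos
  have hp : 1 ≤ 1/ξ := (le_div_iff₀ hξ0).2 (by linarith)
  have h := Real.arith_mean_le_rpow_mean s (fun _ => ((s.card:ℝ))⁻¹) (fun i => u i ^ ξ)
    (fun i _ => by positivity)
    (by rw [Finset.sum_const, nsmul_eq_mul]; field_simp)
    (fun i hi => Real.rpow_nonneg (hu i hi) ξ) hp
  have hzp : ∀ i ∈ s, (u i ^ ξ) ^ (1/ξ) = u i := fun i hi => by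
    rw [← Real.rpow_mul (hu i hi), mul_one_div, div_self hξ0.ne', Real.rpow_one]
  simp only [one_div_one_div] at h
  have heq : (∑ i ∈ s, ((s.card:ℝ))⁻¹ * (u i ^ ξ) ^ (1/ξ)) = ∑ i ∈ s, ((s.card:ℝ))⁻¹ * u i :=
    Finset.sum_congr rfl (fun i hi => by rw [hzp i hi])
  rw [heq] at h
  rw [← Finset.mul_sum, ← Finset.mul_sum] at h
  have hS : 0 ≤ ∑ i ∈ s, u i := Finset.sum_nonneg hu
  have h2 : ((s.card:ℝ))⁻¹ * ∑ i ∈ s, u i ^ ξ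
      ≤ ((s.card:ℝ))⁻¹ ^ ξ * (∑ i ∈ s, u i) ^ ξ := by
    calc _ ≤ ((s.card:ℝ)⁻¹ * ∑ i ∈ s, u i) ^ ξ := h
    _ = _ := Real.mul_rpow (by positivity) hS
  have h3 : ∑ i ∈ s, u i ^ ξ ≤ (s.card:ℝ) * ((s.card:ℝ))⁻¹ ^ ξ * (∑ i ∈ s, u i) ^ ξ := by
    rw [mul_assoc]
    calc ∑ i ∈ s, u i ^ ξ = (s.card:ℝ) * (((s.card:ℝ))⁻¹ * ∑ i ∈ s, u i ^ ξ) := by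
          field_simp
    _ ≤ _ := by nlinarith [h2]
  calc ∑ i ∈ s, u i ^ ξ ≤ _ := h3
  _ = (s.card : ℝ) ^ (1 - ξ) * (∑ i ∈ s, u i) ^ ξ := by
      rw [Real.inv_rpow hc.le, Real.rpow_sub hc, Real.rpow_one, div_eq_mul_inv]

/-- The inner optimization `U(z)` of Theorem 3.6: for `0 < ξ < 1`, `d ≥ 2` and
`z ∈ [1,d]`, the maximum of `(Σ_j u_j^ξ)^{1/ξ}` over the unit simplex subject to
`d·max_j u_j = z` equals `(1/d)(z^ξ + (d-1)^{1-ξ}(d-z)^ξ)^{1/ξ}`, attained at the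
point with one coordinate `z/d` and the other `d-1` coordinates `(d-z)/(d(d-1))`. -/
theorem inner_optimization_U (d : ℕ) (hd : 2 ≤ d) (ξ : ℝ) (hξ0 : 0 < ξ) (hξ1 : ξ < 1)
    (z : ℝ) (hz : z ∈ Set.Icc (1 : ℝ) d) :
    IsGreatest
      { y : ℝ | ∃ u : Fin d → ℝ, (∀ j, 0 ≤ u j) ∧ (∑ j, u j = 1) ∧
          (d : ℝ) * (⨆ j, u j) = z ∧ y = (∑ j, (u j) ^ ξ) ^ (1 / ξ) }
      ((1 / d) * (z ^ ξ + ((d : ℝ) - 1) ^ (1 - ξ) * ((d : ℝ) - z) ^ ξ) ^ (1 / ξ)) ∧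
    (∀ j : Fin d, 0 ≤ (fun j : Fin d => if (j : ℕ) = 0 then z / d else ((d : ℝ) - z) / (d * ((d : ℝ) - 1))) j) ∧
    (∑ j : Fin d, (if (j : ℕ) = 0 then z / d else ((d : ℝ) - z) / (d * ((d : ℝ) - 1))) = 1) ∧
    ((d : ℝ) * (⨆ j : Fin d, (if (j : ℕ) = 0 then z / d else ((d : ℝ) - z) / (d * ((d : ℝ) - 1)))) = z) ∧
    ((∑ j : Fin d, (if (j : ℕ) = 0 then z / d else ((d : ℝ) - z) / (d * ((d : ℝ) - 1))) ^ ξ) ^ (1 / ξ)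
        = (1 / d) * (z ^ ξ + ((d : ℝ) - 1) ^ (1 - ξ) * ((d : ℝ) - z) ^ ξ) ^ (1 / ξ)) := by
  haveI : NeZero d := ⟨by omega⟩
  obtain ⟨hz1, hzd⟩ := hz
  have hD2 : (2:ℝ) ≤ (d:ℝ) := by exact_mod_cast hd
  have hD0 : (0:ℝ) < d := by linarith
  have hD1 : (0:ℝ) < (d:ℝ) - 1 := by linarith
  have hz0 : (0:ℝ) < z := by linarith
  have hDz : (0:ℝ) ≤ (d:ℝ) - z := by linarith
  set a : ℝ := z / d with ha_def
  set b : ℝ := ((d:ℝ) - z) / (d * ((d:ℝ) - 1)) with hb_def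
  have ha : 0 < a := by positivity
  have hb : 0 ≤ b := by positivity
  have hba : b ≤ a := by
    rw [ha_def, hb_def, div_le_div_iff₀ (by positivity) hD0]
    nlinarith [mul_nonneg (mul_nonneg hD0.le hD0.le) (sub_nonneg.2 hz1)]
  -- sum of the candidate-shaped functions
  have hcard : ∀ j0 : Fin d, (((univ.erase j0).card : ℕ) : ℝ) = (d:ℝ) - 1 := by
    intro j0
    rw [Finset.card_erase_of_mem (Finset.mem_univ _), Finset.card_univ, Fintype.card_fin,
      Nat.cast_sub (by omega)]
    simp
  have hsum_ite : ∀ p q : ℝ, ∑ j : Fin d, (if (j:ℕ) = 0 then p else q)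
      = p + ((d:ℝ) - 1) * q := by
    intro p q
    rw [← Finset.add_sum_erase _ _ (Finset.mem_univ (0 : Fin d))]
    have h0 : (((0:Fin d)):ℕ) = 0 := rfl
    rw [if_pos h0]
    congr 1
    rw [Finset.sum_congr rfl (fun j hj => if_neg (fun h => (Finset.mem_erase.1 hj).1 (Fin.ext (by simpa using h)))),
      Finset.sum_const, nsmul_eq_mul, hcard]
  -- basic properties of the candidate
  have hnn : ∀ j : Fin d, (0:ℝ) ≤ if (j:ℕ) = 0 then a else b := by
    intro j; split
    · exact ha.le
    · exact hb
  have hsum1 : ∑ j : Fin d, (if (j:ℕ) = 0 then a else b) = 1 := by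
    rw [hsum_ite, ha_def, hb_def]
    field_simp
    ring
  have hsup : (⨆ j : Fin d, (if (j:ℕ) = 0 then a else b)) = a := by
    apply le_antisymm
    · exact ciSup_le (fun j => by split <;> [exact le_rfl; exact hba])
    · have := le_ciSup (Finite.bddAbove_range
        (fun j : Fin d => if (j:ℕ) = 0 then a else b)) (0 : Fin d)
      simpa using this
  have hDsup : (d:ℝ) * (⨆ j : Fin d, (if (j:ℕ) = 0 then a else b)) = z := by
    rw [hsup, ha_def]; field_simp
  -- value computations
  set num : ℝ := z ^ ξ + ((d:ℝ) - 1) ^ (1 - ξ) * ((d:ℝ) - z) ^ ξ with hnum_def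
  have hnum : 0 ≤ num :=
    add_nonneg (Real.rpow_nonneg hz0.le _)
      (mul_nonneg (Real.rpow_nonneg hD1.le _) (Real.rpow_nonneg hDz _))
  have h1ξ : ((d:ℝ) - 1) ^ (1 - ξ) = ((d:ℝ) - 1) / ((d:ℝ) - 1) ^ ξ := by
    rw [Real.rpow_sub hD1, Real.rpow_one]
  have hdξ : (0:ℝ) < ((d:ℝ)) ^ ξ := Real.rpow_pos_of_pos hD0 _
  have hd1ξ : (0:ℝ) < ((d:ℝ) - 1) ^ ξ := Real.rpow_pos_of_pos hD1 _
  have hfinal : (num / ((d:ℝ)) ^ ξ) ^ (1/ξ) = (1 / d) * num ^ (1/ξ) := by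
    rw [Real.div_rpow hnum hdξ.le, ← Real.rpow_mul hD0.le, mul_one_div, div_self hξ0.ne',
      Real.rpow_one]
    ring
  have hSval : a ^ ξ + ((d:ℝ) - 1) * b ^ ξ = num / ((d:ℝ)) ^ ξ := by
    rw [ha_def, hb_def, Real.div_rpow hz0.le hD0.le, Real.div_rpow hDz (by positivity),
      Real.mul_rpow hD0.le hD1.le, hnum_def, h1ξ]
    field_simp
  have hval : (∑ j : Fin d, (if (j:ℕ) = 0 then a else b) ^ ξ) ^ (1/ξ)
      = (1 / d) * num ^ (1/ξ) := by
    have : (∑ j : Fin d, (if (j:ℕ) = 0 then a else b) ^ ξ)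
        = ∑ j : Fin d, (if (j:ℕ) = 0 then a ^ ξ else b ^ ξ) :=
      Finset.sum_congr rfl (fun j _ => by split <;> rfl)
    rw [this, hsum_ite, hSval, hfinal]
  refine ⟨⟨⟨fun j => if (j:ℕ) = 0 then a else b, hnn, hsum1, hDsup, hval.symm⟩, ?_⟩,
    hnn, hsum1, hDsup, hval⟩
  -- upper bound
  rintro y ⟨u, hu0, hu1, husup, rfl⟩
  obtain ⟨j0, hj0⟩ := Finite.exists_max u
  have hsupu : (⨆ j, u j) = u j0 :=
    le_antisymm (ciSup_le hj0) (le_ciSup (Finite.bddAbove_range u) j0)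
  have huj0 : u j0 = z / d := by
    rw [hsupu] at husup
    rw [eq_div_iff hD0.ne']
    linarith
  have hrest : ∑ j ∈ univ.erase j0, u j = ((d:ℝ) - z) / d := by
    have h := Finset.add_sum_erase univ u (Finset.mem_univ j0)
    rw [hu1, huj0] at h
    have h2 : ∑ j ∈ univ.erase j0, u j = 1 - z / (d:ℝ) := by linarith
    rw [h2]
    field_simp
  have hne : (univ.erase j0).Nonempty := by
    rw [← Finset.card_pos, Finset.card_erase_of_mem (Finset.mem_univ _),
      Finset.card_univ, Fintype.card_fin]
    omega
  have hkey := sum_rpow_le_card_rpow (univ.erase j0) u (fun i _ => hu0 i) hξ0 hξ1.le hne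
  rw [hcard j0, hrest] at hkey
  have hsplit : ∑ j, u j ^ ξ = u j0 ^ ξ + ∑ j ∈ univ.erase j0, u j ^ ξ :=
    (Finset.add_sum_erase univ (fun j => u j ^ ξ) (Finset.mem_univ j0)).symm
  have hble : ∑ j, u j ^ ξ ≤ num / ((d:ℝ)) ^ ξ := by
    have heq2 : (z/(d:ℝ)) ^ ξ + ((d:ℝ) - 1) ^ (1 - ξ) * (((d:ℝ) - z)/d) ^ ξ
        = num / ((d:ℝ)) ^ ξ := by
      rw [Real.div_rpow hz0.le hD0.le, Real.div_rpow hDz hD0.le, hnum_def]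
      field_simp
    rw [hsplit, huj0, ← heq2]
    exact add_le_add le_rfl hkey
  calc (∑ j, u j ^ ξ) ^ (1/ξ) ≤ (num / ((d:ℝ)) ^ ξ) ^ (1/ξ) :=
        Real.rpow_le_rpow (Finset.sum_nonneg (fun j _ => Real.rpow_nonneg (hu0 j) _))
          hble (by positivity)
  _ = (1 / d) * num ^ (1/ξ) := hfinal
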